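/- If a graph G has a matching M that is maximum among matchings avoiding a vertex set V_δ, and G contains no collection of δ+1 vertex-disjoint connected three-vertex subgraphs where δ is the maximum size of such a collection and V_δ covers such a maximum collection, then the subgraph of G induced on the vertices outside V_δ has no edges other than those of M; i.e., every edge of G − V_δ belongs to the induced matching M. -/
import Mathlib

lemma aux_conn {V : Type*} [DecidableEq V] (G : SimpleGraph V) {a b c : V}
    (hab : G.Adj a b) (hac : G.Adj a c) :
    (G.induce (({a, b, c} : Finset V) : Set V)).Connected := by
  have ha : a ∈ (({a, b, c} : Finset V) : Set V) := by simp
  have hb : b ∈ (({a, b, c} : Finset V) : Set V) := by simp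
  have hc : c ∈ (({a, b, c} : Finset V) : Set V) := by simp
  rw [SimpleGraph.connected_iff]
  refine ⟨?_, ⟨⟨a, ha⟩⟩⟩
  have hA : ∀ u (hu : u ∈ (({a, b, c} : Finset V) : Set V)),
      (G.induce (({a, b, c} : Finset V) : Set V)).Reachable ⟨u, hu⟩ ⟨a, ha⟩ := by
    intro u hu
    have : u = a ∨ u = b ∨ u = c := by simpa using hu
    rcases this with rfl | rfl | rfl
    · rfl
    · exact (SimpleGraph.Adj.reachable (by exact hab.symm : G.Adj u a))
    · exact (SimpleGraph.Adj.reachable (by exact hac.symm : G.Adj u a))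
  rintro ⟨u, hu⟩ ⟨v, hv⟩
  exact (hA u hu).trans (hA v hv).symm

/-- If `P` is a maximum-size collection of pairwise vertex-disjoint connected
three-vertex subgraphs of `G` (of size `δ`), `Vδ` its vertex set, and `M` a maximum matching
of `G − Vδ`, then every edge of `G − Vδ` belongs to `M`. -/
theorem stmt0 {V : Type*} [Fintype V] [DecidableEq V]
    (G : SimpleGraph V) (δ : ℕ) (P : Finset (Finset V)) (Vδ : Finset V)
    (M : Finset (Sym2 V))
    (hP : ∀ s ∈ P, s.card = 3 ∧ (G.induce (s : Set V)).Connected)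
    (hPdisj : ∀ s ∈ P, ∀ t ∈ P, s ≠ t → Disjoint s t)
    (hPcard : P.card = δ)
    (hmax : ∀ Q : Finset (Finset V),
      (∀ s ∈ Q, s.card = 3 ∧ (G.induce (s : Set V)).Connected) →
      (∀ s ∈ Q, ∀ t ∈ Q, s ≠ t → Disjoint s t) → Q.card ≤ δ)
    (hVδ : Vδ = P.biUnion id)
    (hM : ∀ e ∈ M, e ∈ G.edgeSet ∧ ∀ v ∈ e, v ∉ Vδ)
    (hMmatch : ∀ e ∈ M, ∀ f ∈ M, e ≠ f → ∀ v, v ∈ e → v ∉ f)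
    (hMmax : ∀ M' : Finset (Sym2 V),
      (∀ e ∈ M', e ∈ G.edgeSet ∧ ∀ v ∈ e, v ∉ Vδ) →
      (∀ e ∈ M', ∀ f ∈ M', e ≠ f → ∀ v, v ∈ e → v ∉ f) →
      M'.card ≤ M.card) :
    ∀ e ∈ G.edgeSet, (∀ v ∈ e, v ∉ Vδ) → e ∈ M := by
  -- key: no vertex outside Vδ with two distinct neighbors outside Vδ forming a cherry
  have key : ∀ a b c : V, G.Adj a b → G.Adj a c → b ≠ c →
      a ∉ Vδ → b ∉ Vδ → c ∉ Vδ → False := by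
    intro a b c hab hac hbc haV hbV hcV
    set s : Finset V := {a, b, c} with hs
    have hsnot : s ∉ P := by
      intro hsP
      exact haV (by rw [hVδ]; exact Finset.mem_biUnion.mpr ⟨s, hsP, by simp [hs]⟩)
    have hcard : s.card = 3 := by
      rw [hs]
      rw [Finset.card_insert_of_notMem (by simp [hab.ne, hac.ne]),
        Finset.card_insert_of_notMem (by simpa using hbc)]
      simp
    have hQ := hmax (insert s P) ?_ ?_
    · rw [Finset.card_insert_of_notMem hsnot, hPcard] at hQ
      omega
    · intro t ht
      rcases Finset.mem_insert.mp ht with rfl | htP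
      · exact ⟨hcard, aux_conn G hab hac⟩
      · exact hP t htP
    · intro t ht u hu htu
      have hdisjP : ∀ u ∈ P, Disjoint s u := by
        intro u huP
        rw [Finset.disjoint_left]
        intro x hxs hxu
        have hxV : x ∈ Vδ := by
          rw [hVδ]; exact Finset.mem_biUnion.mpr ⟨u, huP, hxu⟩
        have : x = a ∨ x = b ∨ x = c := by simpa [hs] using hxs
        rcases this with rfl | rfl | rfl
        exacts [haV hxV, hbV hxV, hcV hxV]
      rcases Finset.mem_insert.mp ht with rfl | htP
      · rcases Finset.mem_insert.mp hu with rfl | huP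
        · exact absurd rfl htu
        · exact hdisjP u huP
      · rcases Finset.mem_insert.mp hu with rfl | huP
        · exact (hdisjP t htP).symm
        · exact hPdisj t htP u huP htu
  intro e he hev
  by_contra heM
  induction e using Sym2.ind with
  | _ a b =>
  rw [SimpleGraph.mem_edgeSet] at he
  have haV : a ∉ Vδ := hev a (by simp)
  have hbV : b ∉ Vδ := hev b (by simp)
  by_cases hshare : ∃ f ∈ M, a ∈ f ∨ b ∈ f
  · obtain ⟨f, hfM, hor⟩ := hshare
    induction f using Sym2.ind with
    | _ x y =>
    have hfe : s(x, y) ≠ s(a, b) := fun h => heM (h ▸ hfM)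
    have hxV : x ∉ Vδ := (hM _ hfM).2 x (by simp)
    have hyV : y ∉ Vδ := (hM _ hfM).2 y (by simp)
    have hxy : G.Adj x y := (hM _ hfM).1
    simp only [Sym2.mem_iff] at hor
    -- in each case, produce a cherry
    rcases hor with (rfl | rfl) | (rfl | rfl)
    · -- a = x : cherry at a with b and y
      have hby : b ≠ y := by rintro rfl; exact hfe rfl
      exact key a b y he hxy hby haV hbV hyV
    · -- a = y : cherry at a with b and x
      have hbx : b ≠ x := by rintro rfl; exact hfe (Sym2.eq_swap)
      exact key a b x he hxy.symm hbx haV hbV hxV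
    · -- b = x : cherry at b with a and y
      have hay : a ≠ y := by rintro rfl; exact hfe Sym2.eq_swap
      exact key b a y he.symm hxy hay hbV haV hyV
    · -- b = y : cherry at b with a and x
      have hax : a ≠ x := by rintro rfl; exact hfe rfl
      exact key b a x he.symm hxy.symm hax hbV haV hxV
  · push_neg at hshare
    have h1 := hMmax (insert s(a, b) M) ?_ ?_
    · rw [Finset.card_insert_of_notMem heM] at h1
      omega
    · intro e' he'
      rcases Finset.mem_insert.mp he' with rfl | he'M
      · exact ⟨he, hev⟩
      · exact hM e' he'M
    · intro e' he' f' hf' hne v hve'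
      rcases Finset.mem_insert.mp he' with rfl | he'M
      · rcases Finset.mem_insert.mp hf' with rfl | hf'M
        · exact absurd rfl hne
        · intro hvf'
          rcases Sym2.mem_iff.mp hve' with rfl | rfl
          · exact (hshare f' hf'M).1 hvf'
          · exact (hshare f' hf'M).2 hvf'
      · rcases Finset.mem_insert.mp hf' with rfl | hf'M
        · intro hvf'
          rcases Sym2.mem_iff.mp hvf' with rfl | rfl
          · exact (hshare e' he'M).1 hve'
          · exact (hshare e' he'M).2 hve'
        · exact hMmatch e' he'M f' hf'M hne v hve'
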